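/- There exists an absolute constant c > 0 such that for all positive integers k and b with n = k·b, the infimum over λ ∈ [0,1) of ‖A C_λ^{-1}‖_{2→∞} · sens_{k,b}(C_λ) is at most c·(k + √k · n^{1/4}). -/

import Mathlib

open Finset
set_option maxHeartbeats 1000000

/-- Euclidean norm of a vector in `ℝⁿ`. -/
noncomputable def norm2 {n : ℕ} (v : Fin n → ℝ) : ℝ := Real.sqrt (∑ i, v i ^ 2)

/-- Frobenius norm of a square matrix. -/
noncomputable def frob {n : ℕ} (B : Matrix (Fin n) (Fin n) ℝ) : ℝ :=
  Real.sqrt (∑ i, ∑ j, B i j ^ 2)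

/-- `‖B‖_{2→∞}`: the maximum Euclidean norm of a row of `B`. -/
noncomputable def rowMax {n : ℕ} (B : Matrix (Fin n) (Fin n) ℝ) : ℝ :=
  ⨆ i : Fin n, norm2 (fun j => B i j)

/-- The `n × n` prefix-sum matrix: lower triangular, all entries on or below the diagonal are 1. -/
def Amat (n : ℕ) : Matrix (Fin n) (Fin n) ℝ :=
  fun i j => if (j : ℕ) ≤ (i : ℕ) then 1 else 0

/-- The DP-λCGD strategy matrix `C_λ`: lower triangular Toeplitz with `(C_λ)_{ij} = λ^{i-j}`. -/
noncomputable def Cmat (n : ℕ) (l : ℝ) : Matrix (Fin n) (Fin n) ℝ :=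
  fun i j => if (j : ℕ) ≤ (i : ℕ) then l ^ ((i : ℕ) - (j : ℕ)) else 0

/-- The inverse `C_λ⁻¹`: ones on the diagonal, `-λ` on the first subdiagonal, zero elsewhere. -/
noncomputable def Cinvmat (n : ℕ) (l : ℝ) : Matrix (Fin n) (Fin n) ℝ :=
  fun i j => if (i : ℕ) = (j : ℕ) then 1 else if (i : ℕ) = (j : ℕ) + 1 then -l else 0

/-- `sens_{k,b}(C)`: Euclidean norm of `∑_{j=0}^{k-1} C_{:,jb+1}` (columns 1-indexed, so the
column of 1-based index `j*b + 1` is the column of `Fin`-index `j*b`). -/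
noncomputable def sens (n k b : ℕ) (C : Matrix (Fin n) (Fin n) ℝ) : ℝ :=
  norm2 (fun i => ∑ j ∈ Finset.range k, if h : j * b < n then C i ⟨j * b, h⟩ else 0)

/-- `d_j`: Euclidean norm of the `j`-th column of `C_λ`. -/
noncomputable def dcol (n : ℕ) (l : ℝ) (j : Fin n) : ℝ :=
  norm2 (fun i => Cmat n l i j)

/-- The column-normalized DP-λCGD strategy matrix `C̃ = C_λ D⁻¹`. -/
noncomputable def Ctil (n : ℕ) (l : ℝ) : Matrix (Fin n) (Fin n) ℝ :=
  Cmat n l * (Matrix.diagonal (dcol n l))⁻¹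

/- ### Auxiliary lemmas -/

lemma entry (n : ℕ) (l : ℝ) (i j : Fin n) :
    (Amat n * Cinvmat n l) i j =
      if (j:ℕ) = (i:ℕ) then 1 else if (j:ℕ) < (i:ℕ) then 1 - l else 0 := by
  rw [Matrix.mul_apply]
  have key : ∀ m : Fin n, Amat n i m * Cinvmat n l m j =
      (if m = j then (if (j:ℕ) ≤ (i:ℕ) then (1:ℝ) else 0) else 0) +
      (if (m:ℕ) = (j:ℕ)+1 then (if (j:ℕ)+1 ≤ (i:ℕ) then -l else 0) else 0) := by
    intro m
    unfold Amat Cinvmat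
    by_cases h1 : (m:ℕ) = (j:ℕ)
    · have : m = j := Fin.ext h1
      subst this
      simp [h1]
    · have hne : m ≠ j := fun h => h1 (by rw [h])
      by_cases h2 : (m:ℕ) = (j:ℕ)+1
      · simp only [h1, h2, hne, if_false, if_true]
        split_ifs <;> first | omega | ring
      · simp [h1, h2, hne]
  rw [Finset.sum_congr rfl (fun m _ => key m), Finset.sum_add_distrib]
  rw [Finset.sum_ite_eq' Finset.univ j]
  have h2 : (∑ m : Fin n, if (m:ℕ) = (j:ℕ)+1 then (if (j:ℕ)+1 ≤ (i:ℕ) then -l else 0) else 0)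
      = if (j:ℕ)+1 ≤ (i:ℕ) then -l else 0 := by
    by_cases hn : (j:ℕ)+1 < n
    · have : ∀ m : Fin n, ((m:ℕ) = (j:ℕ)+1) ↔ m = ⟨(j:ℕ)+1, hn⟩ := by
        intro m; constructor
        · intro h; exact Fin.ext h
        · intro h; subst h; rfl
      simp_rw [this]
      rw [Finset.sum_ite_eq' Finset.univ]
      simp
    · have hle : ¬ ((j:ℕ)+1 ≤ (i:ℕ)) := by
        intro h; exact hn (lt_of_le_of_lt h i.isLt)
      simp only [hle, if_false]
      apply Finset.sum_eq_zero
      intro m _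
      have : ¬ ((m:ℕ) = (j:ℕ)+1) := by
        intro h; exact hn (h ▸ m.isLt)
      simp [this]
  rw [h2]
  simp only [Finset.mem_univ, if_true]
  rcases lt_trichotomy ((j:ℕ)) ((i:ℕ)) with h | h | h
  · have h' : (j:ℕ) ≠ (i:ℕ) := ne_of_lt h
    have : (j:ℕ)+1 ≤ (i:ℕ) := h
    simp only [h.le, this, h', h, if_true, if_false]
    ring
  · simp [h]
  · have : ¬ ((j:ℕ) ≤ (i:ℕ)) := not_le.mpr h
    have h2 : ¬ ((j:ℕ)+1 ≤ (i:ℕ)) := by omega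
    have h3 : (j:ℕ) ≠ (i:ℕ) := ne_of_gt h
    have h4 : ¬ ((j:ℕ) < (i:ℕ)) := not_lt.mpr h.le
    simp [this, h2, h3, h4]

lemma rowMax_le (n : ℕ) (hn : 1 ≤ n) (l : ℝ)
    (hx : (n:ℝ) * (1-l)^2 ≤ 1) :
    rowMax (Amat n * Cinvmat n l) ≤ Real.sqrt 2 := by
  have : Nonempty (Fin n) := ⟨⟨0, hn⟩⟩
  apply ciSup_le
  intro i
  unfold norm2
  apply Real.sqrt_le_sqrt
  calc ∑ j, ((Amat n * Cinvmat n l) i j)^2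
      ≤ ∑ j : Fin n, ((if j = i then (1:ℝ) else 0) + (1-l)^2) := by
        apply Finset.sum_le_sum
        intro j _
        rw [entry]
        simp only [Fin.ext_iff]
        split_ifs <;> first | omega | nlinarith [sq_nonneg (1-l)]
    _ = 1 + (n:ℝ)*(1-l)^2 := by
        rw [Finset.sum_add_distrib, Finset.sum_ite_eq' Finset.univ i]
        simp [mul_comm]
    _ ≤ 2 := by linarith

lemma geo_le (y : ℝ) (h0 : 0 ≤ y) (h1 : y < 1) (t : ℕ) :
    ∑ m ∈ range t, y^m ≤ (1-y)⁻¹ := by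
  have hy : y ≠ 1 := ne_of_lt h1
  rw [geom_sum_eq hy]
  have hpos : 0 < 1 - y := by linarith
  have e : (y^t-1)/(y-1) = (1-y^t)/(1-y) := by
    rw [div_eq_div_iff (by intro h; apply hy; linarith [sub_eq_zero.mp h]) (ne_of_gt hpos)]
    ring
  rw [e, ← one_div]
  have ht : y^t ≥ 0 := pow_nonneg h0 t
  gcongr
  · linarith

lemma bern (x : ℝ) (h0 : 0 ≤ x) (h1 : x ≤ 1) (b : ℕ) :
    (1-x)^b ≤ (1 + b*x)⁻¹ := by
  have hpos : (0:ℝ) < 1 + b*x := by positivity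
  have h2 : 1 + (b:ℝ)*x ≤ (1+x)^b := one_add_mul_le_pow (by linarith) b
  have h3 : (1+x)^b * (1-x)^b ≤ 1 := by
    rw [← mul_pow]
    have : (1+x)*(1-x) = 1 - x^2 := by ring
    rw [this]
    apply pow_le_one₀ (by nlinarith) (by nlinarith)
  have h4 : (1 + (b:ℝ)*x) * (1-x)^b ≤ 1 := by
    calc (1 + (b:ℝ)*x) * (1-x)^b ≤ (1+x)^b * (1-x)^b :=
          mul_le_mul_of_nonneg_right h2 (pow_nonneg (by linarith) b)
      _ ≤ 1 := h3
  rw [inv_eq_one_div, le_div_iff₀ hpos]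
  linarith [h4]

lemma modsum (f : ℕ → ℝ) (k b : ℕ) :
    ∑ i ∈ range (k*b), f (i % b) = k * ∑ r ∈ range b, f r := by
  induction k with
  | zero => simp
  | succ k ih =>
    have h : (k+1)*b = k*b + b := by ring
    rw [h, Finset.sum_range_add, ih]
    have h2 : ∀ j ∈ range b, f ((k*b + j) % b) = f j := by
      intro j hj
      rw [Nat.mul_add_mod' k b j, Nat.mod_eq_of_lt (Finset.mem_range.mp hj)]
    rw [Finset.sum_congr rfl h2]
    push_cast
    ring

lemma v_le (k b : ℕ) (hb : 1 ≤ b) (l : ℝ) (hl0 : 0 ≤ l) (i : Fin (k*b)) :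
    (∑ j ∈ range k, if h : j*b < k*b then Cmat (k*b) l i ⟨j*b, h⟩ else 0)
      ≤ l^((i:ℕ) % b) * ∑ m ∈ range k, (l^b)^m := by
  have hbpos : 0 < b := hb
  set q := (i:ℕ)/b with hq
  set r := (i:ℕ)%b with hr
  have hi : q*b + r = (i:ℕ) := by
    rw [hq, hr, Nat.mul_comm]; exact Nat.div_add_mod _ _
  have hrb : r < b := Nat.mod_lt _ hbpos
  have hqk : q + 1 ≤ k := by
    have h2 : (i:ℕ) < k * b := i.isLt
    have := (Nat.div_lt_iff_lt_mul hbpos).mpr h2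
    omega
  have step1 : (∑ j ∈ range k, if h : j*b < k*b then Cmat (k*b) l i ⟨j*b, h⟩ else 0)
      = ∑ j ∈ range (q+1), l ^ ((i:ℕ) - j*b) := by
    rw [← Finset.sum_subset (Finset.range_subset_range.mpr hqk)]
    · apply Finset.sum_congr rfl
      intro j hj
      have hj' : j ≤ q := by simpa [Nat.lt_succ_iff] using hj
      have hle : j*b ≤ (i:ℕ) := by
        have := Nat.mul_le_mul_right b hj'
        omega
      have hjb : j*b < k*b := lt_of_le_of_lt hle i.isLt
      simp [hjb, Cmat, hle]
    · intro j hjk hjq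
      have hj : q+1 ≤ j := by
        simp only [Finset.mem_range] at hjq
        omega
      have hmul : (q+1)*b ≤ j*b := Nat.mul_le_mul_right b hj
      have hexp : (q+1)*b = q*b + b := by ring
      have hnle : ¬ (j*b ≤ (i:ℕ)) := by omega
      split_ifs with h
      · simp [Cmat, hnle]
      · rfl
  rw [step1, ← Finset.sum_range_reflect (fun j => l ^ ((i:ℕ) - j*b)) (q+1)]
  have step2 : ∀ j ∈ range (q+1),
      l ^ ((i:ℕ) - (q+1-1-j)*b) = l^r * (l^b)^j := by
    intro j hj
    have hjq : j ≤ q := by simpa [Nat.lt_succ_iff] using hj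
    have h0 : q+1-1-j = q - j := by omega
    have e1 : (q-j)*b + j*b = q*b := by
      rw [← Nat.add_mul, Nat.sub_add_cancel hjq]
    have e2 : (i:ℕ) - (q-j)*b = j*b + r := by omega
    rw [h0, e2, pow_add, Nat.mul_comm j b, pow_mul, mul_comm]
  rw [Finset.sum_congr rfl step2, ← Finset.mul_sum]
  apply mul_le_mul_of_nonneg_left _ (by positivity)
  apply Finset.sum_le_sum_of_subset_of_nonneg (Finset.range_subset_range.mpr hqk)
  intro m _ _
  positivity

lemma v_nonneg (k b : ℕ) (l : ℝ) (hl0 : 0 ≤ l) (i : Fin (k*b)) :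
    0 ≤ ∑ j ∈ range k, if h : j*b < k*b then Cmat (k*b) l i ⟨j*b, h⟩ else 0 := by
  apply Finset.sum_nonneg
  intro j _
  split_ifs with h
  · unfold Cmat
    split_ifs
    · positivity
    · exact le_refl 0
  · exact le_refl 0

lemma sens_sq_le (k b : ℕ) (hb : 1 ≤ b) (l : ℝ) (hl0 : 0 ≤ l) :
    sens (k*b) k b (Cmat (k*b) l) ^ 2 ≤
      (∑ m ∈ range k, (l^b)^m)^2 * ((k:ℝ) * ∑ r ∈ range b, (l^2)^r) := by
  unfold sens norm2
  rw [Real.sq_sqrt (Finset.sum_nonneg fun i _ => sq_nonneg _)]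
  set S := ∑ m ∈ range k, (l^b)^m with hS
  calc (∑ i : Fin (k*b),
          (∑ j ∈ range k, if h : j*b < k*b then Cmat (k*b) l i ⟨j*b, h⟩ else 0)^2)
      ≤ ∑ i : Fin (k*b), (l^((i:ℕ)%b) * S)^2 := by
        apply Finset.sum_le_sum
        intro i _
        exact pow_le_pow_left₀ (v_nonneg k b l hl0 i) (v_le k b hb l hl0 i) 2
    _ = S^2 * ∑ i : Fin (k*b), (l^2)^((i:ℕ)%b) := by
        rw [Finset.mul_sum]
        apply Finset.sum_congr rfl
        intro i _
        rw [mul_pow, ← pow_mul, mul_comm ((i:ℕ)%b) 2, pow_mul, mul_comm]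
    _ = S^2 * ((k:ℝ) * ∑ r ∈ range b, (l^2)^r) := by
        rw [Fin.sum_univ_eq_sum_range (fun i => (l^2)^(i%b)) (k*b), modsum]

lemma le_of_sq_le_sq' (a t : ℝ) (h : a^2 ≤ t^2) (ha : 0 ≤ a) (ht : 0 ≤ t) : a ≤ t := by
  nlinarith

lemma sens_nonneg (n k b : ℕ) (C : Matrix (Fin n) (Fin n) ℝ) : 0 ≤ sens n k b C :=
  Real.sqrt_nonneg _

lemma rowMax_nonneg {n : ℕ} (B : Matrix (Fin n) (Fin n) ℝ) : 0 ≤ rowMax B :=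
  Real.iSup_nonneg fun _ => Real.sqrt_nonneg _

theorem stmt_1 : ∃ c : ℝ, 0 < c ∧ ∀ k b : ℕ, 1 ≤ k → 1 ≤ b →
    (⨅ l : Set.Ico (0 : ℝ) 1,
      rowMax (Amat (k * b) * Cinvmat (k * b) (l : ℝ)) *
        sens (k * b) k b (Cmat (k * b) (l : ℝ)))
    ≤ c * ((k : ℝ) + Real.sqrt k * ((k * b : ℕ) : ℝ) ^ ((1 : ℝ) / 4)) := by
  refine ⟨3, by norm_num, ?_⟩
  intro k b hk hb
  set n := k * b with hn
  have hn1 : 1 ≤ n := Nat.one_le_iff_ne_zero.mpr (by positivity)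
  have hnR : (1:ℝ) ≤ (n:ℝ) := by exact_mod_cast hn1
  set s : ℝ := Real.sqrt n with hs
  have hs1 : 1 ≤ s := by
    rw [hs, show (1:ℝ) = Real.sqrt 1 by simp]
    exact Real.sqrt_le_sqrt hnR
  have hs0 : 0 < s := lt_of_lt_of_le one_pos hs1
  have hssq : s^2 = (n:ℝ) := Real.sq_sqrt (by linarith)
  set x : ℝ := s⁻¹ with hxdef
  have hx0 : 0 < x := inv_pos.mpr hs0
  have hx1 : x ≤ 1 := by
    rw [hxdef]
    exact inv_le_one_of_one_le₀ hs1
  have hxsq : (n:ℝ) * x^2 = 1 := by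
    rw [hxdef, ← hssq]
    field_simp
  set l : ℝ := 1 - x with hldef
  have hl0 : 0 ≤ l := by simp [hldef]; linarith
  have hl1 : l < 1 := by simp [hldef]; linarith
  have hmem : l ∈ Set.Ico (0:ℝ) 1 := ⟨hl0, hl1⟩
  -- bound the infimum by the value at l
  have hbdd : BddBelow (Set.range fun (t : Set.Ico (0:ℝ) 1) =>
      rowMax (Amat n * Cinvmat n (t : ℝ)) * sens n k b (Cmat n (t : ℝ))) := by
    refine ⟨0, ?_⟩
    rintro y ⟨t, rfl⟩
    exact mul_nonneg (rowMax_nonneg _) (sens_nonneg _ _ _ _)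
  refine le_trans (ciInf_le hbdd ⟨l, hmem⟩) ?_
  -- rowMax bound
  have hrow : rowMax (Amat n * Cinvmat n l) ≤ Real.sqrt 2 := by
    apply rowMax_le n hn1 l
    have : 1 - l = x := by rw [hldef]; ring
    rw [this, hxsq]
  have hsqrt2 : Real.sqrt 2 ≤ 3/2 := by
    nlinarith [Real.sq_sqrt (by norm_num : (0:ℝ) ≤ 2), Real.sqrt_nonneg 2]
  -- S and G
  set S := ∑ m ∈ range k, ((l^b : ℝ))^m with hSdef
  set G := ∑ r ∈ range b, ((l^2 : ℝ))^r with hGdef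
  have hS0 : 0 ≤ S := Finset.sum_nonneg fun m _ => by positivity
  have hG0 : 0 ≤ G := Finset.sum_nonneg fun r _ => by positivity
  have hsens_sq : sens n k b (Cmat n l) ^ 2 ≤ S^2 * ((k:ℝ) * G) :=
    sens_sq_le k b hb l hl0
  have hsens0 : 0 ≤ sens n k b (Cmat n l) := sens_nonneg _ _ _ _
  -- S ≤ (1 + b x)/(b x)
  have hbx : (0:ℝ) < (b:ℝ) * x := by
    have : (1:ℝ) ≤ (b:ℝ) := by exact_mod_cast hb
    nlinarith
  have hlb : l^b ≤ (1 + (b:ℝ)*x)⁻¹ := by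
    rw [hldef]
    exact bern x hx0.le hx1 b
  have hlb1 : l^b < 1 := pow_lt_one₀ hl0 hl1 (by omega)
  have hSgeo : S ≤ (1 - l^b)⁻¹ := geo_le (l^b) (pow_nonneg hl0 b) hlb1 k
  have hS2 : S ≤ (1 + (b:ℝ)*x) / ((b:ℝ)*x) := by
    have hpos1 : (0:ℝ) < 1 + (b:ℝ)*x := by linarith
    have h1 : ((b:ℝ)*x)/(1 + (b:ℝ)*x) ≤ 1 - l^b := by
      have : 1 - (1 + (b:ℝ)*x)⁻¹ = ((b:ℝ)*x)/(1 + (b:ℝ)*x) := by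
        field_simp
        ring
      linarith [this ▸ (by linarith [hlb] : 1 - (1 + (b:ℝ)*x)⁻¹ ≤ 1 - l^b)]
    have hpos2 : (0:ℝ) < ((b:ℝ)*x)/(1 + (b:ℝ)*x) := by positivity
    calc S ≤ (1 - l^b)⁻¹ := hSgeo
      _ ≤ (((b:ℝ)*x)/(1 + (b:ℝ)*x))⁻¹ := by
          apply inv_anti₀ hpos2 h1
      _ = (1 + (b:ℝ)*x) / ((b:ℝ)*x) := by
          rw [inv_div]
  -- case split
  have hrhs0 : 0 ≤ Real.sqrt k * ((n:ℕ):ℝ) ^ ((1:ℝ)/4) := by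
    apply mul_nonneg (Real.sqrt_nonneg _)
    exact Real.rpow_nonneg (Nat.cast_nonneg _) _
  have hk1 : (1:ℝ) ≤ (k:ℝ) := by exact_mod_cast hk
  rcases le_total b k with hbk | hkb
  · -- b ≤ k : sens ≤ 2k
    have hbxle : (b:ℝ)*x ≤ 1 := by
      have hb2 : ((b:ℝ)*x)^2 ≤ 1 := by
        have h1 : (b:ℝ) * (b:ℝ) ≤ (n:ℝ) := by
          rw [hn]
          push_cast
          have : (b:ℝ) ≤ (k:ℝ) := by exact_mod_cast hbk
          nlinarith [hbx]
        calc ((b:ℝ)*x)^2 = (b:ℝ)*(b:ℝ)*x^2 := by ring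
          _ ≤ (n:ℝ) * x^2 := mul_le_mul_of_nonneg_right h1 (sq_nonneg x)
          _ = 1 := hxsq
      nlinarith [hbx]
    have hS4 : S ≤ 2 / ((b:ℝ)*x) := by
      calc S ≤ (1 + (b:ℝ)*x) / ((b:ℝ)*x) := hS2
        _ ≤ 2 / ((b:ℝ)*x) := by
            apply (div_le_div_iff_of_pos_right hbx).mpr
            linarith
    have hGb : G ≤ (b:ℝ) := by
      calc G ≤ ∑ _r ∈ range b, (1:ℝ) := by
            apply Finset.sum_le_sum
            intro r _
            apply pow_le_one₀ (by positivity)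
            nlinarith
        _ = (b:ℝ) := by simp
    have hsens_le : sens n k b (Cmat n l) ≤ 2*(k:ℝ) := by
      have hkey : S^2 * ((k:ℝ) * G) ≤ (2*(k:ℝ))^2 := by
        have h1 : S^2 ≤ (2/((b:ℝ)*x))^2 := by
          apply pow_le_pow_left₀ hS0 hS4
        have h2 : (k:ℝ) * G ≤ (k:ℝ)*(b:ℝ) := by nlinarith
        have h3 : (2/((b:ℝ)*x))^2 * ((k:ℝ)*(b:ℝ)) = 4*(k:ℝ)*(b:ℝ)/((b:ℝ)^2*x^2) := by
          field_simp
          ring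
        have h4 : (b:ℝ)^2 * x^2 * ((k:ℝ)/(b:ℝ)) = (n:ℝ)*x^2 * 1 := by
          rw [hn]; push_cast; field_simp
        have hx2 : x^2 = ((n:ℝ))⁻¹ := by
          field_simp at hxsq ⊢
          linarith [hxsq]
        calc S^2 * ((k:ℝ)*G) ≤ (2/((b:ℝ)*x))^2 * ((k:ℝ)*(b:ℝ)) := by
              apply mul_le_mul h1 h2 (by positivity) (by positivity)
          _ = 4*(k:ℝ)*(b:ℝ)/((b:ℝ)^2*x^2) := h3
          _ = (2*(k:ℝ))^2 := by
              rw [hx2, hn]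
              push_cast
              have hbne : (b:ℝ) ≠ 0 := by positivity
              have hkne : (k:ℝ) ≠ 0 := by positivity
              field_simp
              ring
      exact le_of_sq_le_sq' _ _ (le_trans hsens_sq hkey) hsens0 (by positivity)
    calc rowMax (Amat n * Cinvmat n l) * sens n k b (Cmat n l)
        ≤ Real.sqrt 2 * (2*(k:ℝ)) := by
          apply mul_le_mul hrow hsens_le hsens0 (Real.sqrt_nonneg 2)
      _ ≤ 3 * (k:ℝ) := by nlinarith [Real.sqrt_nonneg 2]
      _ ≤ 3 * ((k:ℝ) + Real.sqrt k * ((n:ℕ):ℝ) ^ ((1:ℝ)/4)) := by linarith [hrhs0]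
  · -- k ≤ b : sens ≤ 2 √k n^{1/4}
    have hbxge : 1 ≤ (b:ℝ)*x := by
      have hb2 : 1 ≤ ((b:ℝ)*x)^2 := by
        have h1 : (n:ℝ) ≤ (b:ℝ) * (b:ℝ) := by
          rw [hn]
          push_cast
          have : (k:ℝ) ≤ (b:ℝ) := by exact_mod_cast hkb
          nlinarith [hbx]
        calc (1:ℝ) = (n:ℝ) * x^2 := hxsq.symm
          _ ≤ (b:ℝ)*(b:ℝ)*x^2 := mul_le_mul_of_nonneg_right h1 (sq_nonneg x)
          _ = ((b:ℝ)*x)^2 := by ring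
      nlinarith [hbx]
    have hS4 : S ≤ 2 := by
      calc S ≤ (1 + (b:ℝ)*x) / ((b:ℝ)*x) := hS2
        _ ≤ 2 := by
            rw [div_le_iff₀ hbx]
            linarith
    have hGs : G ≤ s := by
      have hl2 : l^2 < 1 := by nlinarith
      have h1 : G ≤ (1 - l^2)⁻¹ := geo_le (l^2) (by positivity) hl2 b
      have h2 : x ≤ 1 - l^2 := by nlinarith
      calc G ≤ (1 - l^2)⁻¹ := h1
        _ ≤ x⁻¹ := inv_anti₀ hx0 h2
        _ = s := by rw [hxdef, inv_inv]
    have hsens_le : sens n k b (Cmat n l) ≤ 2 * Real.sqrt k * ((n:ℕ):ℝ) ^ ((1:ℝ)/4) := by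
      have hn4 : ((n:ℕ):ℝ) ^ ((1:ℝ)/4) = Real.sqrt s := by
        rw [hs, Real.sqrt_eq_rpow, Real.sqrt_eq_rpow, ← Real.rpow_mul (Nat.cast_nonneg n)]
        norm_num
      have hkey : S^2 * ((k:ℝ)*G) ≤ (2 * Real.sqrt k * Real.sqrt s)^2 := by
        have e : (2 * Real.sqrt k * Real.sqrt s)^2 = 4 * (k:ℝ) * s := by
          rw [mul_pow, mul_pow, Real.sq_sqrt (by positivity), Real.sq_sqrt hs0.le]
          norm_num
        rw [e]
        have h1 : S^2 ≤ 4 := by nlinarith [hS0, hS4]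
        have h2 : (k:ℝ)*G ≤ (k:ℝ)*s := mul_le_mul_of_nonneg_left hGs (by positivity)
        have h3 : (0:ℝ) ≤ (k:ℝ)*G := by positivity
        calc S^2 * ((k:ℝ)*G) ≤ 4*((k:ℝ)*s) := mul_le_mul h1 h2 h3 (by norm_num)
          _ = 4*(k:ℝ)*s := by ring
      rw [hn4]
      exact le_of_sq_le_sq' _ _ (le_trans hsens_sq hkey) hsens0 (by positivity)
    calc rowMax (Amat n * Cinvmat n l) * sens n k b (Cmat n l)
        ≤ Real.sqrt 2 * (2 * Real.sqrt k * ((n:ℕ):ℝ) ^ ((1:ℝ)/4)) := by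
          apply mul_le_mul hrow hsens_le hsens0 (Real.sqrt_nonneg 2)
      _ = (Real.sqrt 2 * 2) * (Real.sqrt k * ((n:ℕ):ℝ) ^ ((1:ℝ)/4)) := by ring
      _ ≤ 3 * (Real.sqrt k * ((n:ℕ):ℝ) ^ ((1:ℝ)/4)) :=
          mul_le_mul_of_nonneg_right (by linarith [hsqrt2]) hrhs0
      _ ≤ 3 * ((k:ℝ) + Real.sqrt k * ((n:ℕ):ℝ) ^ ((1:ℝ)/4)) := by linarith [hk1]
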